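/- Let A = [[1,1],[0,1]] and B = [[1,0],[-1,1]] in SL(2,ℤ). Then for every integer n ≥ 1, A^(4n) * B * (A^2 * B^2)^(2n-1) * A^2 * B = 1. -/

import Mathlib

/-- The matrix of the right-handed Dehn twist `t_a` in `SL(2, ℤ)`. -/
def DehnA : Matrix.SpecialLinearGroup (Fin 2) ℤ :=
  ⟨!![1, 1; 0, 1], by norm_num [Matrix.det_fin_two_of]⟩

/-- The matrix of the right-handed Dehn twist `t_b` in `SL(2, ℤ)`. -/
def DehnB : Matrix.SpecialLinearGroup (Fin 2) ℤ :=
  ⟨!![1, 0; -1, 1], by norm_num [Matrix.det_fin_two_of]⟩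

lemma powA (k : ℕ) : (!![1, 1; 0, 1] : Matrix (Fin 2) (Fin 2) ℤ) ^ k
    = !![1, (k : ℤ); 0, 1] := by
  induction k with
  | zero => simp [Matrix.one_fin_two]
  | succ m ih =>
      rw [pow_succ, ih, Matrix.mul_fin_two]
      push_cast
      ring_nf

lemma powD (m : ℕ) : (!![5, -4; 4, -3] : Matrix (Fin 2) (Fin 2) ℤ) ^ m
    = !![1 + 4 * (m : ℤ), -(4 * (m : ℤ)); 4 * (m : ℤ), 1 - 4 * (m : ℤ)] := by
  induction m with
  | zero => simp [Matrix.one_fin_two]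
  | succ m ih =>
      rw [pow_succ, ih, Matrix.mul_fin_two]
      push_cast
      ring_nf

/-- For every `n ≥ 1`, `A^(4n) * B * (A^2 * B^2)^(2n-1) * A^2 * B = 1` in `SL(2, ℤ)`. -/
theorem monodromy_word_eq_one :
    ∀ n : ℕ, 1 ≤ n →
      DehnA ^ (4 * n) * DehnB * (DehnA ^ 2 * DehnB ^ 2) ^ (2 * n - 1) *
        DehnA ^ 2 * DehnB = 1 := by
  intro n hn
  apply Subtype.ext
  simp only [Matrix.SpecialLinearGroup.coe_mul,
    Matrix.SpecialLinearGroup.coe_pow, Matrix.SpecialLinearGroup.coe_one]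
  rw [show ((DehnA : Matrix (Fin 2) (Fin 2) ℤ)) = !![1, 1; 0, 1] from rfl,
    show ((DehnB : Matrix (Fin 2) (Fin 2) ℤ)) = !![1, 0; -1, 1] from rfl]
  have h1 : 2 * n - 1 = 2 * (n - 1) + 1 := by omega
  rw [h1, pow_succ, pow_mul]
  have hC : (!![1, 1; 0, 1] : Matrix (Fin 2) (Fin 2) ℤ) ^ 2 * !![1, 0; -1, 1] ^ 2
      = !![(-3), 2; -2, 1] := by
    rw [powA]
    norm_num [pow_two, Matrix.mul_fin_two]
  have hC2 : ((!![(-3), 2; -2, 1] : Matrix (Fin 2) (Fin 2) ℤ)) ^ 2 = !![5, -4; 4, -3] := by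
    norm_num [pow_two, Matrix.mul_fin_two]
  rw [← pow_mul, powA (4*n), hC, pow_mul, hC2, powD, powA 2]
  have hcast : ((n - 1 : ℕ) : ℤ) = (n : ℤ) - 1 := by
    omega
  rw [hcast]
  norm_num [pow_two, Matrix.mul_fin_two, Matrix.one_fin_two]
  ext i j
  fin_cases i <;> fin_cases j <;> simp <;> ring
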